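/- For every a₀ > 0, every c > 0, every G̃ > 0 and every integer M ≥ 2 there exist ε₀ ∈ (0,1) and c₀ > 0 such that the following holds. Let e be an integer with e ≥ 1, let Ĵ : ℤ → ℂ satisfy |Ĵ(q)| ≥ c for all q ∉ {e, −e}, for each 2 ≤ n ≤ M let g_n : ℤ^n → ℂ satisfy |g_n| ≤ G̃ everywhere, and let P : ℤ → ℂ satisfy P(−q) = conj(P(q)) for all q ∈ ℤ, |P(q)| ≤ ε₀ for all q ∈ ℤ, |P(q)| ≤ a₀/q² for all q ≠ 0, and the harmonic-balance equation Ĵ(q)·P(q) = Σ_{n=2}^{M} S(g_n,n,P)(q) for all q ∉ {e, −e}. Then either P = 0, or the following all hold: P(e) ≠ 0, sup_{q∈ℤ} |P(q)| = |P(e)|, and |P(q)| ≤ c₀·|P(e)|² for every q ∉ {e, −e}. -/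

import Mathlib

/-- For `q : ℤ` and `k = (k₁, …, k_m) : Fin m → ℤ`, `diffs q k i` is the `i`-th successive
difference in the chain `q, k₁, k₂, …, k_m, 0`; i.e. `diffs q k 0 = q - k₁`,
`diffs q k i = kᵢ - k_{i+1}` for `1 ≤ i ≤ m - 1`, and `diffs q k m = k_m`. -/
def diffs (q : ℤ) {m : ℕ} (k : Fin m → ℤ) (i : ℕ) : ℤ :=
  (q :: (List.ofFn k ++ [0])).getD i 0 - (q :: (List.ofFn k ++ [0])).getD (i + 1) 0

/-- `Sg n g P q = Σ_{k₁,…,k_{n-1} ∈ ℤ} g(q,k₁,…,k_{n-1}) · P(q-k₁)·P(k₁-k₂)⋯P(k_{n-1})`,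
the convolution-type multiple series with kernel `g`. -/
noncomputable def Sg (n : ℕ) (g : (Fin n → ℤ) → ℂ) (P : ℤ → ℂ) (q : ℤ) : ℂ :=
  ∑' k : Fin (n - 1) → ℤ,
    g (fun i : Fin n => (q :: List.ofFn k).getD (i : ℕ) 0) *
      ∏ i ∈ Finset.range n, P (diffs q k i)

lemma diffs_cons_zero (q d : ℤ) {m : ℕ} (k : Fin m → ℤ) :
    diffs q (Fin.cons d k) 0 = q - d := by
  simp [diffs, List.ofFn_succ]

lemma diffs_cons_succ (q d : ℤ) {m : ℕ} (k : Fin m → ℤ) (i : ℕ) :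
    diffs q (Fin.cons d k) (i + 1) = diffs d k i := by
  simp [diffs, List.ofFn_succ]

/-- iterated convolution of `f` with itself: `hconv f m` is the (m+1)-fold convolution. -/
noncomputable def hconv (f : ℤ → ℝ) : ℕ → ℤ → ℝ
  | 0 => f
  | (m+1) => fun q => ∑' d : ℤ, f (q - d) * hconv f m d

lemma summable_shift {f : ℤ → ℝ} (hfs : Summable f) (q : ℤ) :
    Summable fun d : ℤ => f (q - d) :=
  hfs.comp_injective (sub_right_injective)

lemma tsum_shift {f : ℤ → ℝ} (q : ℤ) :
    ∑' d : ℤ, f (q - d) = ∑' d : ℤ, f d :=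
  (Equiv.subLeft q).tsum_eq f

lemma conv_main (f : ℤ → ℝ) (hf0 : ∀ d, 0 ≤ f d) (hfs : Summable f)
    (ε : ℝ) (hfb : ∀ d, f d ≤ ε) (m : ℕ) :
    (∀ q, 0 ≤ hconv f m q) ∧ (∀ q, hconv f m q ≤ ε * (∑' d, f d) ^ m) ∧
      (∀ q, Summable (fun d : ℤ => f (q - d) * hconv f m d)) ∧
      (∀ q, Summable (fun k : Fin m → ℤ => ∏ i ∈ Finset.range (m+1), f (diffs q k i))) ∧
      (∀ q, (∑' k : Fin m → ℤ, ∏ i ∈ Finset.range (m+1), f (diffs q k i)) = hconv f m q) := by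
  have hε0 : 0 ≤ ε := le_trans (hf0 0) (hfb 0)
  set A : ℝ := ∑' d, f d with hA
  have hA0 : 0 ≤ A := tsum_nonneg hf0
  induction m with
  | zero =>
    refine ⟨fun q => hf0 q, fun q => by simpa [hconv] using hfb q, fun q => ?_, fun q => ?_, fun q => ?_⟩
    · apply Summable.of_nonneg_of_le (fun d => mul_nonneg (hf0 _) (hf0 _))
        (fun d => ?_) ((summable_shift hfs q).mul_right ε)
      exact mul_le_mul_of_nonneg_left (hfb d) (hf0 _)
    · haveI : Unique (Fin 0 → ℤ) := ⟨⟨fun i => i.elim0⟩, fun k => funext fun i => i.elim0⟩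
      exact summable_of_finite_support (Set.Finite.subset (Set.finite_univ) (by simp))
    · haveI : Unique (Fin 0 → ℤ) := ⟨⟨fun i => i.elim0⟩, fun k => funext fun i => i.elim0⟩
      rw [tsum_eq_single (default : Fin 0 → ℤ) (fun b hb => absurd (Subsingleton.elim b _) hb)]
      simp [diffs, hconv]
  | succ m ih =>
    obtain ⟨ih0, ihb, ihsum, ihS, ihT⟩ := ih
    have hkey : ∀ (q d : ℤ) (k : Fin m → ℤ),
        (∏ i ∈ Finset.range (m+1+1), f (diffs q (Fin.cons d k) i)) =
          f (q - d) * ∏ i ∈ Finset.range (m+1), f (diffs d k i) := by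
      intro q d k
      rw [Finset.prod_range_succ']
      rw [diffs_cons_zero, mul_comm]
      congr 1
      exact Finset.prod_congr rfl fun i _ => by rw [diffs_cons_succ]
    have hG : ∀ q : ℤ, Summable (fun p : ℤ × (Fin m → ℤ) =>
        (∏ i ∈ Finset.range (m+1+1), f (diffs q (Fin.cons p.1 p.2) i))) := by
      intro q
      rw [summable_prod_of_nonneg (fun p => Finset.prod_nonneg fun i _ => hf0 _)]
      constructor
      · intro d
        apply Summable.congr (((ihS d).mul_left (f (q - d))))
        intro k; rw [hkey]
      · apply Summable.congr (ihsum q)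
        intro d
        rw [← ihT d, ← tsum_mul_left]
        exact tsum_congr fun k => (hkey q d k).symm
    have hb : ∀ q, 0 ≤ hconv f (m+1) q := by
      intro q
      exact tsum_nonneg fun d => mul_nonneg (hf0 _) (ih0 d)
    have hble : ∀ q, hconv f (m+1) q ≤ ε * A ^ (m+1) := by
      intro q
      have h1 : hconv f (m+1) q ≤ ∑' d : ℤ, f (q - d) * (ε * A ^ m) := by
        apply Summable.tsum_le_tsum (fun d => mul_le_mul_of_nonneg_left (ihb d) (hf0 _))
          (ihsum q) ((summable_shift hfs q).mul_right _)
      calc hconv f (m+1) q ≤ ∑' d : ℤ, f (q - d) * (ε * A ^ m) := h1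
        _ = (∑' d : ℤ, f (q - d)) * (ε * A ^ m) := tsum_mul_right
        _ = ε * A ^ (m + 1) := by rw [tsum_shift]; ring
    refine ⟨hb, hble, fun q => ?_, fun q => ?_, fun q => ?_⟩
    · apply Summable.of_nonneg_of_le (fun d => mul_nonneg (hf0 _) (hb d))
        (fun d => ?_) (((summable_shift hfs q).mul_right (ε * A ^ (m+1))))
      exact mul_le_mul_of_nonneg_left (hble d) (hf0 _)
    · -- Summable over Fin (m+1) → ℤ
      apply ((Fin.consEquiv (fun _ : Fin (m+1) => ℤ)).summable_iff).mp
      exact Summable.congr (hG q) fun p => rfl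
    · -- tsum computation
      rw [← (Fin.consEquiv (fun _ : Fin (m+1) => ℤ)).tsum_eq
        (fun k : Fin (m+1) → ℤ => ∏ i ∈ Finset.range (m+1+1), f (diffs q k i))]
      have h2 : (∑' p : ℤ × (Fin m → ℤ),
          ∏ i ∈ Finset.range (m+1+1), f (diffs q (Fin.cons p.1 p.2) i)) =
          ∑' d : ℤ, ∑' k : Fin m → ℤ,
            ∏ i ∈ Finset.range (m+1+1), f (diffs q (Fin.cons d k) i) := by
        apply Summable.tsum_prod' (hG q)
        intro d
        apply Summable.congr (((ihS d).mul_left (f (q - d))))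
        intro k; rw [hkey]
      calc (∑' p : ℤ × (Fin m → ℤ),
            ∏ i ∈ Finset.range (m+1+1),
              f (diffs q ((Fin.consEquiv (fun _ : Fin (m+1) => ℤ)) p) i))
          = ∑' p : ℤ × (Fin m → ℤ),
            ∏ i ∈ Finset.range (m+1+1), f (diffs q (Fin.cons p.1 p.2) i) := by
            exact tsum_congr fun p => rfl
        _ = ∑' d : ℤ, ∑' k : Fin m → ℤ,
            ∏ i ∈ Finset.range (m+1+1), f (diffs q (Fin.cons d k) i) := h2
        _ = ∑' d : ℤ, f (q - d) * hconv f m d := by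
            apply tsum_congr
            intro d
            rw [← ihT d, ← tsum_mul_left]
            exact tsum_congr fun k => hkey q d k
        _ = hconv f (m+1) q := rfl

lemma natTail (F : ℕ → ℝ) (hF0 : ∀ n, 0 ≤ F n) (hFs : Summable F) (ε a₀ : ℝ) (ha₀ : 0 ≤ a₀)
    (hFb : ∀ n, F n ≤ ε) (hFd : ∀ n : ℕ, 1 ≤ n → F n ≤ a₀ / (n : ℝ) ^ 2)
    (N : ℕ) (hN : 1 ≤ N) :
    ∑' n, F n ≤ (N + 1) * ε + a₀ / N := by
  rw [← Summable.sum_add_tsum_nat_add (N+1) hFs]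
  have h1 : ∑ i ∈ Finset.range (N+1), F i ≤ (N + 1) * ε := by
    calc ∑ i ∈ Finset.range (N+1), F i ≤ ∑ _i ∈ Finset.range (N+1), ε :=
          Finset.sum_le_sum fun i _ => hFb i
      _ = (N + 1) * ε := by simp [mul_comm]
  have h2 : (∑' n : ℕ, F (n + (N+1))) ≤ a₀ / N := by
    apply Summable.tsum_le_of_sum_le ((summable_nat_add_iff (f := F) (N+1)).2 hFs)
    intro u
    obtain ⟨R, hR⟩ := u.exists_nat_subset_range
    calc ∑ i ∈ u, F (i + (N+1)) ≤ ∑ i ∈ Finset.range R, F (i + (N+1)) :=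
          Finset.sum_le_sum_of_subset_of_nonneg hR fun i _ _ => hF0 _
      _ ≤ ∑ i ∈ Finset.range R, a₀ * (((i + (N+1) : ℕ) : ℝ) ^ 2)⁻¹ := by
          apply Finset.sum_le_sum
          intro i _
          rw [← div_eq_mul_inv]
          exact hFd _ (by omega)
      _ = ∑ j ∈ Finset.Ico (N+1) (N+1+R), a₀ * ((j : ℝ) ^ 2)⁻¹ := by
          rw [Finset.sum_Ico_eq_sum_range]
          simp only [Nat.add_sub_cancel_left]
          exact Finset.sum_congr rfl fun i _ => by rw [add_comm (N+1) i]
      _ = a₀ * ∑ j ∈ Finset.Ioc N (N+R), ((j : ℝ) ^ 2)⁻¹ := by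
          rw [← Finset.mul_sum]
          congr 1
          congr 1
          rw [show N+1+R = (N+R)+1 by omega, Finset.Ico_add_one_right_eq_Icc, Finset.Icc_add_one_left_eq_Ioc]
      _ ≤ a₀ * ((N : ℝ)⁻¹ - ((N+R : ℕ) : ℝ)⁻¹) := by
          apply mul_le_mul_of_nonneg_left _ ha₀
          exact_mod_cast sum_Ioc_inv_sq_le_sub (by omega) (by omega)
      _ ≤ a₀ / N := by
          rw [div_eq_mul_inv]
          apply mul_le_mul_of_nonneg_left _ ha₀
          have : (0:ℝ) ≤ ((N + R : ℕ) : ℝ)⁻¹ := by positivity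
          linarith
  linarith

set_option maxHeartbeats 2000000 in
theorem stmt10 (a₀ c Gb : ℝ) (ha₀ : 0 < a₀) (hc : 0 < c) (hGb : 0 < Gb)
    (M : ℕ) (hM : 2 ≤ M) :
    ∃ ε₀ ∈ Set.Ioo (0 : ℝ) 1, ∃ c₀ : ℝ, 0 < c₀ ∧
      ∀ e : ℤ, 1 ≤ e →
      ∀ J : ℤ → ℂ, (∀ q : ℤ, q ≠ e → q ≠ -e → c ≤ ‖J q‖) →
      ∀ g : (n : ℕ) → (Fin n → ℤ) → ℂ,
        (∀ n : ℕ, 2 ≤ n → n ≤ M → ∀ v : Fin n → ℤ, ‖g n v‖ ≤ Gb) →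
      ∀ P : ℤ → ℂ,
        (∀ q : ℤ, P (-q) = starRingEnd ℂ (P q)) →
        (∀ q : ℤ, ‖P q‖ ≤ ε₀) →
        (∀ q : ℤ, q ≠ 0 → ‖P q‖ ≤ a₀ / (q : ℝ) ^ 2) →
        (∀ q : ℤ, q ≠ e → q ≠ -e → J q * P q = ∑ n ∈ Finset.Icc 2 M, Sg n (g n) P q) →
        P = 0 ∨
          (P e ≠ 0 ∧ (⨆ q : ℤ, ‖P q‖) = ‖P e‖ ∧
            ∀ q : ℤ, q ≠ e → q ≠ -e → ‖P q‖ ≤ c₀ * ‖P e‖ ^ 2) := by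
  have hM0 : (0 : ℝ) < M := by positivity
  set L : ℝ := Gb * M / c with hLdef
  have hL0 : 0 < L := by positivity
  set δ : ℝ := min 1 (1 / (2 * L)) with hδdef
  have hδ0 : 0 < δ := lt_min one_pos (by positivity)
  have hδ1 : δ ≤ 1 := min_le_left _ _
  have hδL : L * δ ≤ 1 / 2 := by
    have h1 : δ ≤ 1 / (2 * L) := min_le_right _ _
    have h2 : L * (1 / (2 * L)) = 1 / 2 := by field_simp
    nlinarith [mul_le_mul_of_nonneg_left h1 hL0.le]
  set N : ℕ := ⌈4 * a₀ / δ⌉₊ + 1 with hNdef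
  have hN1 : 1 ≤ N := by omega
  have hN0 : (0 : ℝ) < N := by positivity
  have hNδ : 2 * a₀ / N ≤ δ / 2 := by
    have h1 : 4 * a₀ / δ ≤ N := by
      have := Nat.le_ceil (4 * a₀ / δ)
      push_cast [hNdef]
      linarith
    rw [div_le_div_iff₀ hN0 (by norm_num : (0:ℝ) < 2)]
    rw [div_le_iff₀ hδ0] at h1
    nlinarith
  set ε₀ : ℝ := min (min (1/2) (δ / (4 * (N + 1)))) (1 / (8 * L)) with hε₀def
  have hε₀0 : 0 < ε₀ := by
    apply lt_min (lt_min (by norm_num) (by positivity)) (by positivity)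
  have hε₀half : ε₀ ≤ 1 / 2 := le_trans (min_le_left _ _) (min_le_left _ _)
  have hε₀δ : ε₀ ≤ δ / (4 * (N + 1)) := le_trans (min_le_left _ _) (min_le_right _ _)
  have hε₀L : ε₀ ≤ 1 / (8 * L) := min_le_right _ _
  refine ⟨ε₀, ⟨hε₀0, by linarith⟩, 4 * L, by positivity, ?_⟩
  intro e he J hJ g hg P hPsym hPε hPd hbal
  set f : ℤ → ℝ := fun d => ‖P d‖ with hfdef
  have hf0 : ∀ d, 0 ≤ f d := fun d => norm_nonneg _
  have hfs : Summable f := by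
    have hmaj : Summable (fun d : ℤ => (if d = 0 then ε₀ else 0) + a₀ * (1 / (d : ℝ) ^ 2)) := by
      apply Summable.add
      · exact summable_of_ne_finset_zero (s := {0}) (fun d hd => if_neg (by simpa using hd))
      · exact (Real.summable_one_div_int_pow.mpr (by norm_num)).mul_left a₀
    apply Summable.of_nonneg_of_le hf0 (fun d => ?_) hmaj
    by_cases hd : d = 0
    · subst hd; simp [hPε 0]; exact hPε 0
    · rw [if_neg hd]
      have := hPd d hd
      rw [div_eq_mul_one_div] at this
      linarith
  set A : ℝ := ∑' d, f d with hAdef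
  have hA0 : 0 ≤ A := tsum_nonneg hf0
  have hAδ : A ≤ δ := by
    have hsum1 : Summable fun n : ℕ => f (n : ℤ) :=
      hfs.comp_injective (fun a b hab => by exact_mod_cast hab)
    have hsum2 : Summable fun n : ℕ => f (-((n : ℤ) + 1)) := by
      apply hfs.comp_injective
      intro a b hab
      simpa using hab
    have hsplit : A = (∑' n : ℕ, f (n : ℤ)) + ∑' n : ℕ, f (-((n : ℤ) + 1)) :=
      tsum_of_nat_of_neg_add_one hsum1 hsum2
    have hb1 : (∑' n : ℕ, f (n : ℤ)) ≤ (N + 1) * ε₀ + a₀ / N := by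
      apply natTail _ (fun n => hf0 _) hsum1 _ _ ha₀.le (fun n => hPε _)
        (fun n hn => ?_) N hN1
      have := hPd (n : ℤ) (by exact_mod_cast Nat.one_le_iff_ne_zero.mp hn)
      simpa using this
    have hb2 : (∑' n : ℕ, f (-((n : ℤ) + 1))) ≤ (N + 1) * ε₀ + a₀ / N := by
      apply natTail _ (fun n => hf0 _) hsum2 _ _ ha₀.le (fun n => hPε _)
        (fun n hn => ?_) N hN1
      have h := hPd (-((n : ℤ) + 1)) (by omega)
      calc f (-((n : ℤ) + 1)) ≤ a₀ / ((-((n : ℤ) + 1) : ℤ) : ℝ) ^ 2 := h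
        _ = a₀ / ((n : ℝ) + 1) ^ 2 := by push_cast; ring_nf
        _ ≤ a₀ / (n : ℝ) ^ 2 := by
            apply div_le_div_of_nonneg_left ha₀.le
            · have : (1 : ℝ) ≤ (n : ℝ) := by exact_mod_cast hn
              positivity
            · have : (1 : ℝ) ≤ (n : ℝ) := by exact_mod_cast hn
              nlinarith
    have hNε : (N + 1 : ℝ) * ε₀ ≤ δ / 4 := by
      have h := mul_le_mul_of_nonneg_left hε₀δ (show (0:ℝ) ≤ (N:ℝ) + 1 by positivity)
      have h2 : ((N:ℝ) + 1) * (δ / (4 * ((N:ℝ) + 1))) = δ / 4 := by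
        have hne : ((N:ℝ) + 1) ≠ 0 := by positivity
        field_simp
      linarith
    have haN : a₀ / N ≤ δ / 4 := by
      rw [div_le_div_iff₀ hN0 (by norm_num : (0:ℝ) < 2)] at hNδ
      rw [div_le_div_iff₀ hN0 (by norm_num : (0:ℝ) < 4)]
      nlinarith
    rw [hsplit]
    linarith
  have hA1 : A ≤ 1 := le_trans hAδ hδ1
  have hLA : L * A ≤ 1 / 2 :=
    le_trans (mul_le_mul_of_nonneg_left hAδ hL0.le) hδL
  obtain ⟨hc0, hcb, hcsum, hcS, hcT⟩ :
      (∀ m, ∀ q, 0 ≤ hconv f m q) ∧ (∀ m, ∀ q, hconv f m q ≤ ε₀ * A ^ m) ∧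
      (∀ m, ∀ q, Summable (fun d : ℤ => f (q - d) * hconv f m d)) ∧
      (∀ m, ∀ q, Summable (fun k : Fin m → ℤ => ∏ i ∈ Finset.range (m+1), f (diffs q k i))) ∧
      (∀ m, ∀ q, (∑' k : Fin m → ℤ, ∏ i ∈ Finset.range (m+1), f (diffs q k i))
        = hconv f m q) := by
    refine ⟨fun m => (conv_main f hf0 hfs ε₀ hPε m).1,
      fun m => (conv_main f hf0 hfs ε₀ hPε m).2.1,
      fun m => (conv_main f hf0 hfs ε₀ hPε m).2.2.1,
      fun m => (conv_main f hf0 hfs ε₀ hPε m).2.2.2.1,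
      fun m => (conv_main f hf0 hfs ε₀ hPε m).2.2.2.2⟩
  have hbdd : BddAbove (Set.range fun q : ℤ => f q) := by
    refine ⟨ε₀, ?_⟩
    rintro x ⟨q, rfl⟩
    exact hPε q
  set s : ℝ := ⨆ q : ℤ, f q with hsdef
  have hfle : ∀ q, f q ≤ s := fun q => le_ciSup hbdd q
  have hs0 : 0 ≤ s := le_trans (hf0 0) (hfle 0)
  have hsε : s ≤ ε₀ := ciSup_le hPε
  by_cases hsz : s ≤ 0
  · left
    funext q
    have : f q = 0 := le_antisymm (le_trans (hfle q) hsz) (hf0 q)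
    simpa [hfdef] using this
  · right
    push_neg at hsz
    -- the off-resonance supremum
    have hne : (0 : ℤ) ≠ e ∧ (0 : ℤ) ≠ -e := by omega
    haveI : Nonempty {q : ℤ // q ≠ e ∧ q ≠ -e} := ⟨⟨0, hne.1, hne.2⟩⟩
    have hbddT : BddAbove (Set.range fun q : {q : ℤ // q ≠ e ∧ q ≠ -e} => f q) := by
      refine ⟨ε₀, ?_⟩
      rintro x ⟨q, rfl⟩
      exact hPε q
    set t : ℝ := ⨆ q : {q : ℤ // q ≠ e ∧ q ≠ -e}, f q with htdef
    have htle : ∀ q : ℤ, q ≠ e → q ≠ -e → f q ≤ t := fun q h1 h2 =>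
      le_ciSup hbddT (⟨q, h1, h2⟩ : {q : ℤ // q ≠ e ∧ q ≠ -e})
    have ht0 : 0 ≤ t := le_trans (hf0 0) (htle 0 hne.1 hne.2)
    set B : ℝ := 2 * s ^ 2 + t * A with hBdef
    have hB0 : 0 ≤ B := by positivity
    -- bound for hconv f 1
    have h1B : ∀ q, hconv f 1 q ≤ B := by
      intro q
      have hform : hconv f 1 q = ∑' d : ℤ, f (q - d) * f d := rfl
      set φ : ℤ → ℝ := fun d =>
        (if d = e then s ^ 2 else 0) + ((if d = -e then s ^ 2 else 0) + t * f (q - d)) with hφ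
      have hφS1 : Summable fun d : ℤ => if d = e then s ^ 2 else 0 :=
        summable_of_ne_finset_zero (s := {e}) (fun d hd => if_neg (by simpa using hd))
      have hφS2 : Summable fun d : ℤ => if d = -e then s ^ 2 else 0 :=
        summable_of_ne_finset_zero (s := {-e}) (fun d hd => if_neg (by simpa using hd))
      have hφS3 : Summable fun d : ℤ => t * f (q - d) := (summable_shift hfs q).mul_left t
      have hφS : Summable φ := hφS1.add (hφS2.add hφS3)
      have hss : ∀ x y : ℤ, f x * f y ≤ s ^ 2 := fun x y => by
        nlinarith [hfle x, hfle y, hf0 x, hf0 y, hs0]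
      have hpt : ∀ d, f (q - d) * f d ≤ φ d := by
        intro d
        have hif1 : (0:ℝ) ≤ (if d = e then s ^ 2 else 0) := by split <;> positivity
        have hif2 : (0:ℝ) ≤ (if d = -e then s ^ 2 else 0) := by split <;> positivity
        have h3 : 0 ≤ t * f (q - d) := mul_nonneg ht0 (hf0 _)
        by_cases hd1 : d = e
        · simp only [hφ, if_pos hd1]
          nlinarith [hss (q - d) d]
        · by_cases hd2 : d = -e
          · simp only [hφ, if_neg hd1, if_pos hd2]
            nlinarith [hss (q - d) d]
          · simp only [hφ, if_neg hd1, if_neg hd2]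
            have h4 : f (q - d) * f d ≤ t * f (q - d) := by
              rw [mul_comm t]
              exact mul_le_mul_of_nonneg_left (htle d hd1 hd2) (hf0 _)
            nlinarith [h4]
      have hlhsS : Summable fun d : ℤ => f (q - d) * f d := hcsum 0 q
      have hφT : ∑' d, φ d = s ^ 2 + (s ^ 2 + t * A) := by
        rw [hφ]
        rw [Summable.tsum_add hφS1 (hφS2.add hφS3), Summable.tsum_add hφS2 hφS3]
        rw [tsum_ite_eq, tsum_ite_eq, tsum_mul_left, tsum_shift]
      calc hconv f 1 q = ∑' d : ℤ, f (q - d) * f d := hform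
        _ ≤ ∑' d, φ d := Summable.tsum_le_tsum hpt hlhsS hφS
        _ = s ^ 2 + (s ^ 2 + t * A) := hφT
        _ = B := by rw [hBdef]; ring
    -- bound for all hconv f m, 1 ≤ m
    have hmB : ∀ m, 1 ≤ m → ∀ q, hconv f m q ≤ B := by
      intro m hm
      induction m, hm using Nat.le_induction with
      | base => exact h1B
      | succ m hm ih =>
        intro q
        have h1 : hconv f (m+1) q ≤ ∑' d : ℤ, f (q - d) * B := by
          apply Summable.tsum_le_tsum (fun d => mul_le_mul_of_nonneg_left (ih d) (hf0 _))
            (hcsum m q) ((summable_shift hfs q).mul_right B)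
        calc hconv f (m+1) q ≤ ∑' d : ℤ, f (q - d) * B := h1
          _ = A * B := by rw [tsum_mul_right, tsum_shift]
          _ ≤ 1 * B := mul_le_mul_of_nonneg_right hA1 hB0
          _ = B := one_mul B
    -- norm bound for Sg
    have hSgB : ∀ q : ℤ, ∀ n, 2 ≤ n → n ≤ M → ‖Sg n (g n) P q‖ ≤ Gb * B := by
      intro q n h2n hnM
      obtain ⟨m, rfl⟩ : ∃ m, n = m + 1 := ⟨n - 1, by omega⟩
      have hm1 : 1 ≤ m := by omega
      have hSgdef : Sg (m+1) (g (m+1)) P q =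
          ∑' k : Fin m → ℤ,
            g (m+1) (fun i : Fin (m+1) => (q :: List.ofFn k).getD (i : ℕ) 0) *
              ∏ i ∈ Finset.range (m+1), P (diffs q k i) := rfl
      have hterm : ∀ k : Fin m → ℤ,
          ‖g (m+1) (fun i : Fin (m+1) => (q :: List.ofFn k).getD (i : ℕ) 0) *
            ∏ i ∈ Finset.range (m+1), P (diffs q k i)‖
          ≤ Gb * ∏ i ∈ Finset.range (m+1), f (diffs q k i) := by
        intro k
        rw [norm_mul, norm_prod]
        exact mul_le_mul_of_nonneg_right (hg (m+1) h2n hnM _)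
          (Finset.prod_nonneg fun i _ => hf0 _)
      have hmajS : Summable fun k : Fin m → ℤ =>
          Gb * ∏ i ∈ Finset.range (m+1), f (diffs q k i) := (hcS m q).mul_left Gb
      have hnormS : Summable fun k : Fin m → ℤ =>
          ‖g (m+1) (fun i : Fin (m+1) => (q :: List.ofFn k).getD (i : ℕ) 0) *
            ∏ i ∈ Finset.range (m+1), P (diffs q k i)‖ :=
        Summable.of_nonneg_of_le (fun k => norm_nonneg _) hterm hmajS
      calc ‖Sg (m+1) (g (m+1)) P q‖
          ≤ ∑' k : Fin m → ℤ,
            ‖g (m+1) (fun i : Fin (m+1) => (q :: List.ofFn k).getD (i : ℕ) 0) *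
              ∏ i ∈ Finset.range (m+1), P (diffs q k i)‖ := by
            rw [hSgdef]; exact norm_tsum_le_tsum_norm hnormS
        _ ≤ ∑' k : Fin m → ℤ, Gb * ∏ i ∈ Finset.range (m+1), f (diffs q k i) :=
            Summable.tsum_le_tsum hterm hnormS hmajS
        _ = Gb * hconv f m q := by rw [tsum_mul_left, hcT m q]
        _ ≤ Gb * B := mul_le_mul_of_nonneg_left (hmB m hm1 q) hGb.le
    -- main off-resonance bound
    have hoff : ∀ q : ℤ, q ≠ e → q ≠ -e → f q ≤ L * B := by
      intro q h1 h2
      have hcf : c * f q ≤ ‖J q‖ * f q :=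
        mul_le_mul_of_nonneg_right (hJ q h1 h2) (hf0 q)
      have heq : ‖J q‖ * f q = ‖J q * P q‖ := (norm_mul _ _).symm
      have hsum : ‖∑ n ∈ Finset.Icc 2 M, Sg n (g n) P q‖ ≤ (M : ℝ) * (Gb * B) := by
        calc ‖∑ n ∈ Finset.Icc 2 M, Sg n (g n) P q‖
            ≤ ∑ n ∈ Finset.Icc 2 M, ‖Sg n (g n) P q‖ := norm_sum_le _ _
          _ ≤ ∑ n ∈ Finset.Icc 2 M, Gb * B := by
              apply Finset.sum_le_sum
              intro n hn
              rw [Finset.mem_Icc] at hn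
              exact hSgB q n hn.1 hn.2
          _ = ((Finset.Icc 2 M).card : ℝ) * (Gb * B) := by
              rw [Finset.sum_const, nsmul_eq_mul]
          _ ≤ (M : ℝ) * (Gb * B) := by
              apply mul_le_mul_of_nonneg_right _ (by positivity)
              rw [Nat.card_Icc]
              exact_mod_cast Nat.le_of_lt_succ (by omega)
      have : c * f q ≤ (M : ℝ) * (Gb * B) := by
        rw [heq, hbal q h1 h2] at hcf
        exact le_trans hcf hsum
      rw [hLdef, div_mul_eq_mul_div, le_div_iff₀ hc]
      nlinarith
    have htLB : t ≤ L * B := ciSup_le fun q => hoff q.1 q.2.1 q.2.2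
    have ht4 : t ≤ 4 * L * s ^ 2 := by
      have h1 : t ≤ 2 * L * s ^ 2 + (L * A) * t := by
        have : L * B = 2 * L * s ^ 2 + (L * A) * t := by rw [hBdef]; ring
        linarith [htLB, this ▸ htLB]
      nlinarith [hLA, ht0]
    have hfe : f (-e) = f e := by
      simp only [hfdef]
      rw [hPsym e]
      exact RCLike.norm_conj _
    have htlt : t < s := by
      have h1 : 4 * L * s ^ 2 ≤ 4 * L * ε₀ * s := by nlinarith [hsε, hs0, hL0]
      have h2 : 4 * L * ε₀ ≤ 1 / 2 := by
        have hLne : L ≠ 0 := ne_of_gt hL0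
        have h := mul_le_mul_of_nonneg_left hε₀L (by positivity : (0:ℝ) ≤ 4 * L)
        have h2' : 4 * L * (1 / (8 * L)) = 1 / 2 := by field_simp; ring
        linarith
      have h3 : 4 * L * ε₀ * s ≤ (1 / 2) * s := by nlinarith
      nlinarith [ht4]
    have hse : s ≤ f e := by
      have hmax : s ≤ max (f e) t := by
        apply ciSup_le
        intro q
        by_cases h1 : q = e
        · subst h1; exact le_max_left _ _
        · by_cases h2 : q = -e
          · subst h2; rw [hfe]; exact le_max_left _ _
          · exact le_trans (htle q h1 h2) (le_max_right _ _)
      rcases max_cases (f e) t with ⟨heq, _⟩ | ⟨heq, _⟩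
      · rwa [heq] at hmax
      · rw [heq] at hmax; linarith
    have hseq : s = f e := le_antisymm hse (hfle e)
    have hPe : P e ≠ 0 := by
      rw [← norm_pos_iff]
      show (0 : ℝ) < f e
      linarith [hseq ▸ hsz]
    refine ⟨hPe, hseq, ?_⟩
    intro q h1 h2
    calc ‖P q‖ ≤ t := htle q h1 h2
      _ ≤ 4 * L * s ^ 2 := ht4
      _ = 4 * L * ‖P e‖ ^ 2 := by rw [hseq]
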